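/- arXiv:math/0108208 — 3 statements merged into one kernel-verified Lean document; each statement's English description precedes it below -/
import Mathlib

section
/- Let Λ be a local noetherian ring with residue field κ. If K₁ and K₂ are perfect complexes of Λ-modules whose differentials are zero modulo the maximal ideal, and f : K₁ → K₂ is a homotopy equivalence of complexes, then f is an isomorphism of complexes. -/
/-!
STATEMENT 1 (Lemma 2.2): Let `Λ` be a local noetherian ring.  If `K₁` and `K₂`
are perfect complexes of `Λ`-modules (bounded complexes of finitely generated
free modules) whose differentials vanish modulo the maximal ideal, and
`f : K₁ → K₂` is a homotopy equivalence of complexes, then `f` is an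
isomorphism of complexes.
-/

open CategoryTheory

section Aux

variable {R : Type*} [CommRing R] {M N : Type*} [AddCommGroup M] [Module R M]
  [AddCommGroup N] [Module R N]

lemma aux_map_mem_smul_top (I : Ideal R) (φ : M →ₗ[R] N) {y : M}
    (hy : y ∈ I • (⊤ : Submodule R M)) : φ y ∈ I • (⊤ : Submodule R N) := by
  have : φ y ∈ Submodule.map φ (I • (⊤ : Submodule R M)) :=
    Submodule.mem_map_of_mem hy
  rw [Submodule.map_smul''] at this
  exact smul_mono_right _ le_top (b := (⊤ : Submodule R N)) this

lemma aux_surjective [IsLocalRing R] [Module.Finite R M]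
    (e ε : M →ₗ[R] M)
    (hε : ∀ x, ε x ∈ (IsLocalRing.maximalIdeal R) • (⊤ : Submodule R M))
    (h : ∀ x, e x = x + ε x) : Function.Surjective e := by
  rw [← LinearMap.range_eq_top]
  rw [eq_top_iff]
  refine Submodule.le_of_le_smul_of_le_jacobson_bot (I := IsLocalRing.maximalIdeal R)
    Module.Finite.fg_top ?_ ?_
  · exact (IsLocalRing.jacobson_eq_maximalIdeal ⊥ bot_ne_top).ge
  · intro x _
    have : x = e x - ε x := by rw [h x]; abel
    rw [this]
    exact Submodule.sub_mem _ (Submodule.mem_sup_left ⟨x, rfl⟩)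
      (Submodule.mem_sup_right (hε x))

end Aux

theorem stmt_1 (Λ : Type) [CommRing Λ] [IsLocalRing Λ] [IsNoetherianRing Λ]
    (K₁ K₂ : CochainComplex (ModuleCat Λ) ℤ)
    (hfree₁ : ∀ i, Module.Free Λ (K₁.X i)) (hfin₁ : ∀ i, Module.Finite Λ (K₁.X i))
    (hbdd₁ : ∃ a b : ℤ, ∀ i, (i < a ∨ b < i) → Subsingleton (K₁.X i))
    (hfree₂ : ∀ i, Module.Free Λ (K₂.X i)) (hfin₂ : ∀ i, Module.Finite Λ (K₂.X i))
    (hbdd₂ : ∃ a b : ℤ, ∀ i, (i < a ∨ b < i) → Subsingleton (K₂.X i))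
    (hd₁ : ∀ i j, LinearMap.range (K₁.d i j).hom ≤
      (IsLocalRing.maximalIdeal Λ) • (⊤ : Submodule Λ (K₁.X j)))
    (hd₂ : ∀ i j, LinearMap.range (K₂.d i j).hom ≤
      (IsLocalRing.maximalIdeal Λ) • (⊤ : Submodule Λ (K₂.X j)))
    (f : K₁ ⟶ K₂) (g : K₂ ⟶ K₁)
    (h₁ : Nonempty (Homotopy (f ≫ g) (𝟙 K₁)))
    (h₂ : Nonempty (Homotopy (g ≫ f) (𝟙 K₂))) :
    IsIso f := by
  obtain ⟨H₁⟩ := h₁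
  obtain ⟨H₂⟩ := h₂
  have key : ∀ (K₁' K₂' : CochainComplex (ModuleCat Λ) ℤ)
      (_ : ∀ i, Module.Finite Λ (K₁'.X i))
      (_ : ∀ i j, LinearMap.range (K₁'.d i j).hom ≤
        (IsLocalRing.maximalIdeal Λ) • (⊤ : Submodule Λ (K₁'.X j)))
      (f' : K₁' ⟶ K₂') (g' : K₂' ⟶ K₁') (H : Homotopy (f' ≫ g') (𝟙 K₁'))
      (i : ℤ), Function.Surjective ((f' ≫ g').f i) := by
    intro K₁' K₂' hfin hd f' g' H i
    have hcomm := H.comm i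
    set ε : K₁'.X i ⟶ K₁'.X i := dNext i H.hom + prevD i H.hom with hε
    have heq : ∀ x, ((f' ≫ g').f i) x = x + ε x := by
      intro x
      rw [hcomm]
      show ε x + x = x + ε x
      exact add_comm _ _
    haveI := hfin i
    refine aux_surjective ((f' ≫ g').f i).hom ε.hom ?_ heq
    intro x
    have h1 : (dNext i H.hom) x ∈
        (IsLocalRing.maximalIdeal Λ) • (⊤ : Submodule Λ (K₁'.X i)) := by
      rw [dNext_eq H.hom (c := ComplexShape.up ℤ) (i' := i + 1) (i := i) rfl]
      exact aux_map_mem_smul_top _ (H.hom (i+1) i).hom (hd i (i+1) ⟨x, rfl⟩)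
    have h2 : (prevD i H.hom) x ∈
        (IsLocalRing.maximalIdeal Λ) • (⊤ : Submodule Λ (K₁'.X i)) := by
      rw [prevD_eq H.hom (c := ComplexShape.up ℤ) (j' := i - 1) (j := i) (by simp)]
      exact hd (i-1) i ⟨_, rfl⟩
    simpa [ε] using Submodule.add_mem _ h1 h2
  have hsurj₁ : ∀ i, Function.Surjective ((f ≫ g).f i) :=
    key K₁ K₂ hfin₁ hd₁ f g H₁
  have hsurj₂ : ∀ i, Function.Surjective ((g ≫ f).f i) :=
    key K₂ K₁ hfin₂ hd₂ g f H₂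
  have : ∀ i, IsIso (f.f i) := by
    intro i
    haveI := hfin₁ i
    haveI := hfin₂ i
    have hinj : Function.Injective ((f ≫ g).f i) :=
      IsNoetherian.injective_of_surjective_endomorphism _ (hsurj₁ i)
    have hfinj : Function.Injective (f.f i) := by
      intro x y hxy
      apply hinj
      show (g.f i) ((f.f i) x) = (g.f i) ((f.f i) y)
      rw [hxy]
    have hfsurj : Function.Surjective (f.f i) := by
      intro y
      obtain ⟨x, hx⟩ := hsurj₂ i y
      exact ⟨g.f i x, hx⟩
    exact (ConcreteCategory.isIso_iff_bijective _).mpr ⟨hfinj, hfsurj⟩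
  exact HomologicalComplex.Hom.isIso_of_components f
end

section
/- Let 𝒪 be a complete DVR with fraction field E of characteristic 0, A a local Artin E-algebra with residue field E and maximal ideal n. Let A' ⊆ A be an 𝒪-subalgebra that is finite as 𝒪-module with A' ⊗_𝒪 E ≅ A, let M be a free A-module of rank m, and M' ⊆ M a finitely generated A'-submodule with M' ⊗_𝒪 E ≅ M. Then there exists an 𝒪-subalgebra A'' with A' ⊆ A'' ⊆ A, finite as 𝒪-module, such that A''·M' is a free A''-module of rank m; moreover the image of A''·M' in M/nM equals the image M'₀ of M', and A''M' ⊗_{A''} 𝒪 ≅ M'₀. -/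
/-!
STATEMENT 13 (Lemma 15): Let `𝒪` be a complete DVR with fraction field `E` of
characteristic 0, `A` a local Artin `E`-algebra with residue field `E` and maximal
ideal `n`.  Let `A' ⊆ A` be an `𝒪`-subalgebra which is finite as an `𝒪`-module and
spans `A` over `E` (i.e. `A' ⊗_𝒪 E ≅ A`).  Let `M` be a free `A`-module of rank
`m` and `M' ⊆ M` a finitely generated `A'`-submodule spanning `M` over `E`.  Then
there is an `𝒪`-subalgebra `A' ⊆ A'' ⊆ A`, finite over `𝒪`, such that
`N := A''·M'` is a free `A''`-module of rank `m`; moreover the image of `N` in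
`M/nM` equals the image `M'₀` of `M'`, and the induced map identifies
`N ⊗_{A''} 𝒪 ≅ M'₀`, i.e. the kernel of `N → M/nM` is `(A'' ∩ n)·N`.
-/

open IsLocalRing

-- auxiliary: nilpotent elements are integral
lemma aux_isNilpotent_isIntegral {R A : Type*} [CommRing R] [CommRing A] [Algebra R A]
    {z : A} (hz : IsNilpotent z) : IsIntegral R z := by
  obtain ⟨k, hk⟩ := hz
  refine ⟨Polynomial.X ^ (k + 1), Polynomial.monic_X_pow _, ?_⟩
  simp [Polynomial.eval₂_pow, pow_succ, hk]

theorem stmt_13 (𝒪 E A : Type) [CommRing 𝒪] [IsDomain 𝒪] [IsDiscreteValuationRing 𝒪]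
    [IsAdicComplete (maximalIdeal 𝒪) 𝒪]
    [Field E] [Algebra 𝒪 E] [IsFractionRing 𝒪 E] [CharZero E]
    [CommRing A] [IsLocalRing A] [IsArtinianRing A]
    [Algebra E A] [Algebra 𝒪 A] [IsScalarTower 𝒪 E A]
    (hres : Function.Bijective ((residue A).comp (algebraMap E A)))
    (A' : Subalgebra 𝒪 A) (hA'fin : Module.Finite 𝒪 A')
    (hA'span : Submodule.span E (A' : Set A) = ⊤)
    (m : ℕ) (M : Type) [AddCommGroup M] [Module A M]
    [Module E M] [Module 𝒪 M] [IsScalarTower E A M] [IsScalarTower 𝒪 E M]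
    [IsScalarTower 𝒪 A M]
    (bM : Module.Basis (Fin m) A M)
    (M' : Submodule 𝒪 M) (hM'fg : M'.FG)
    (hM'stable : ∀ a ∈ A', ∀ x ∈ M', a • x ∈ M')
    (hM'span : Submodule.span E (M' : Set M) = ⊤) :
    ∃ A'' : Subalgebra 𝒪 A, A' ≤ A'' ∧ Module.Finite 𝒪 A'' ∧
      -- `N = A''·M'` is a free `A''`-module of rank `m` …
      (∃ v : Fin m → M,
        (∀ i, v i ∈ Submodule.span 𝒪 {y : M | ∃ a ∈ A'', ∃ x ∈ M', y = a • x}) ∧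
        (∀ y ∈ Submodule.span 𝒪 {y : M | ∃ a ∈ A'', ∃ x ∈ M', y = a • x},
          ∃! c : Fin m → A'', y = ∑ i, (c i : A) • v i)) ∧
      -- … with the same image in `M/nM` as `M'` …
      (∀ x : M,
        (∃ y ∈ Submodule.span 𝒪 {y : M | ∃ a ∈ A'', ∃ x ∈ M', y = a • x},
            x - y ∈ (maximalIdeal A • ⊤ : Submodule A M)) ↔
        (∃ y ∈ M', x - y ∈ (maximalIdeal A • ⊤ : Submodule A M))) ∧
      -- … and `N ⊗_{A''} 𝒪 ≅ M'₀`: the kernel of `N → M/nM` is `(A'' ∩ n)·N`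
      (∀ y ∈ Submodule.span 𝒪 {y : M | ∃ a ∈ A'', ∃ x ∈ M', y = a • x},
        (y ∈ (maximalIdeal A • ⊤ : Submodule A M) ↔
          y ∈ Submodule.span 𝒪 {z : M | ∃ a ∈ A'', a ∈ maximalIdeal A ∧
            ∃ x ∈ Submodule.span 𝒪 {y : M | ∃ a ∈ A'', ∃ x ∈ M', y = a • x},
              z = a • x})) := by
  classical
  -- the retraction `ρ : A → E`
  let e : E ≃+* A ⧸ maximalIdeal A := RingEquiv.ofBijective _ hres
  let ρ : A →+* E := e.symm.toRingHom.comp (residue A)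
  have hρE : ∀ x : E, ρ (algebraMap E A x) = x := by
    intro x
    show e.symm (residue A (algebraMap E A x)) = x
    have : residue A (algebraMap E A x) = e x := rfl
    rw [this, RingEquiv.symm_apply_apply]
  have hρker : ∀ a : A, a - algebraMap E A (ρ a) ∈ maximalIdeal A := by
    intro a
    have h1 : residue A (algebraMap E A (ρ a)) = residue A a := by
      show e (e.symm (residue A a)) = residue A a
      exact e.apply_symm_apply _
    have h2 : residue A (a - algebraMap E A (ρ a)) = 0 := by
      rw [map_sub, h1, sub_self]
    exact Ideal.Quotient.eq_zero_iff_mem.mp h2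
  have hρ𝒪 : ∀ o : 𝒪, ρ (algebraMap 𝒪 A o) = algebraMap 𝒪 E o := by
    intro o
    rw [IsScalarTower.algebraMap_apply 𝒪 E A, hρE]
  -- the maximal ideal is nilpotent
  obtain ⟨k, hk⟩ : IsNilpotent (maximalIdeal A) := by
    have h := IsArtinianRing.isNilpotent_jacobson_bot (R := A)
    rwa [IsLocalRing.jacobson_eq_maximalIdeal ⊥ bot_ne_top] at h
  have hnil : ∀ z ∈ maximalIdeal A, IsNilpotent z := by
    intro z hz
    refine ⟨k, ?_⟩
    have h2 := Ideal.pow_mem_pow hz k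
    rw [hk] at h2
    simpa using h2
  -- "good" elements: `𝒪 + n`
  have hGoodInt : ∀ a : A, (∃ o : 𝒪, a - algebraMap 𝒪 A o ∈ maximalIdeal A) →
      IsIntegral 𝒪 a := by
    rintro a ⟨o, ho⟩
    have h1 : IsIntegral 𝒪 (algebraMap 𝒪 A o + (a - algebraMap 𝒪 A o)) :=
      (isIntegral_algebraMap).add (aux_isNilpotent_isIntegral (hnil _ ho))
    simpa using h1
  have hIntGood : ∀ a : A, IsIntegral 𝒪 a →
      ∃ o : 𝒪, a - algebraMap 𝒪 A o ∈ maximalIdeal A := by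
    intro a ha
    let ρalg : A →ₐ[𝒪] E := { toRingHom := ρ, commutes' := hρ𝒪 }
    have h1 : IsIntegral 𝒪 (ρ a) := IsIntegral.map ρalg ha
    obtain ⟨o, ho⟩ := IsIntegrallyClosed.isIntegral_iff.mp h1
    refine ⟨o, ?_⟩
    have : algebraMap 𝒪 A o = algebraMap E A (ρ a) := by
      rw [IsScalarTower.algebraMap_apply 𝒪 E A, ho]
    rw [this]
    exact hρker a
  -- the coordinatewise retraction `φ : M → E^m`
  let φ : M →ₗ[E] (Fin m → E) :=
    { toFun := fun x i => ρ (bM.repr x i)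
      map_add' := by intro x y; funext i; simp
      map_smul' := by
        intro c x
        funext i
        show ρ (bM.repr (c • x) i) = (c • fun j => ρ (bM.repr x j)) i
        rw [Pi.smul_apply, smul_eq_mul, ← algebraMap_smul A c x, LinearEquiv.map_smul,
          Finsupp.smul_apply, smul_eq_mul, map_mul, hρE] }
  have hφsmulA : ∀ (a : A) (y : M), φ (a • y) = ρ a • φ y := by
    intro a y
    funext i
    show ρ (bM.repr (a • y) i) = ρ a * ρ (bM.repr y i)
    rw [LinearEquiv.map_smul, Finsupp.smul_apply, smul_eq_mul, map_mul]
  have hφ𝒪 : ∀ (o : 𝒪) (y : M), φ (o • y) = o • φ y := by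
    intro o y
    rw [← algebraMap_smul E o y, map_smul, algebraMap_smul]
  let φ𝒪 : M →ₗ[𝒪] (Fin m → E) :=
    { toFun := φ
      map_add' := fun x y => map_add φ x y
      map_smul' := fun o x => hφ𝒪 o x }
  have hφsurj : Function.Surjective φ := by
    intro f
    refine ⟨∑ i, f i • bM i, ?_⟩
    funext j
    have h1 : (∑ i, f i • bM i) = ∑ i, algebraMap E A (f i) • bM i := by
      simp [algebraMap_smul]
    show ρ (bM.repr (∑ i, f i • bM i) j) = f j
    rw [h1, map_sum]
    have h2 : ∀ i, (bM.repr (algebraMap E A (f i) • bM i)) j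
        = algebraMap E A (f i) * (bM.repr (bM i)) j := by
      intro i; rw [LinearEquiv.map_smul, Finsupp.smul_apply, smul_eq_mul]
    rw [Finsupp.finset_sum_apply]
    simp only [h2, Module.Basis.repr_self, Finsupp.single_apply]
    rw [Finset.sum_eq_single j]
    · simp [hρE]
    · intro i _ hij; simp [if_neg hij]
    · intro h; exact absurd (Finset.mem_univ j) h
  -- the lattice `L = φ(M')`
  let L : Submodule 𝒪 (Fin m → E) := M'.map φ𝒪
  have hLfg : L.FG := hM'fg.map _
  haveI hLfin : Module.Finite 𝒪 L := Module.Finite.iff_fg.mpr hLfg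
  haveI hLtf : NoZeroSMulDivisors 𝒪 L := by
    refine ⟨fun {o x} h => ?_⟩
    by_cases ho : o = 0
    · exact Or.inl ho
    · refine Or.inr (Subtype.ext (funext fun i => ?_))
      have h1 : o • ((x : Fin m → E) i) = 0 := by
        have h0 := congrArg (fun z : L => (Subtype.val z) i) h
        simpa using h0
      have h3 : algebraMap 𝒪 E o * (x : Fin m → E) i = 0 := by
        rw [← Algebra.smul_def]; exact h1
      rcases mul_eq_zero.mp h3 with h4 | h4
      · exact absurd ((IsFractionRing.injective 𝒪 E) (h4.trans (map_zero _).symm)) ho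
      · simpa using h4
  haveI hLfree : Module.Free 𝒪 L := Module.free_of_finite_type_torsion_free'
  -- a basis of the lattice `L` which is also an `E`-basis of `E^m`
  let ι := Module.Free.ChooseBasisIndex 𝒪 L
  let b : Module.Basis ι 𝒪 L := Module.Free.chooseBasis 𝒪 L
  let w0 : ι → (Fin m → E) := fun i => (b i : Fin m → E)
  have hw0indep𝒪 : LinearIndependent 𝒪 w0 := by
    have h1 : LinearMap.ker L.subtype = ⊥ := Submodule.ker_subtype L
    exact b.linearIndependent.map' L.subtype h1
  have hw0indepE : LinearIndependent E w0 :=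
    (LinearIndependent.iff_fractionRing 𝒪 E).mp hw0indep𝒪
  have hLspan0 : Submodule.span 𝒪 (Set.range w0) = L := by
    have h1 := congrArg (Submodule.map L.subtype) b.span_eq
    rwa [Submodule.map_span, Submodule.map_top, Submodule.range_subtype,
      ← Set.range_comp] at h1
  have hLtopE : Submodule.span E (L : Set (Fin m → E)) = ⊤ := by
    have h1 : (L : Set (Fin m → E)) = φ '' (M' : Set M) := rfl
    rw [h1, ← Submodule.map_span, hM'span, Submodule.map_top,
      LinearMap.range_eq_top.mpr hφsurj]
  have hspanE : Submodule.span E (Set.range w0) = ⊤ := by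
    refine top_unique ?_
    rw [← hLtopE]
    refine Submodule.span_le.mpr ?_
    intro z hz
    have h2 : z ∈ Submodule.span 𝒪 (Set.range w0) := by rw [hLspan0]; exact hz
    exact Submodule.span_subset_span 𝒪 E _ h2
  let bEw0 : Module.Basis ι E (Fin m → E) := Module.Basis.mk hw0indepE (by rw [hspanE])
  let eιm : ι ≃ Fin m := bEw0.indexEquiv (Pi.basisFun E (Fin m))
  let w : Fin m → (Fin m → E) := w0 ∘ eιm.symm
  let bEw : Module.Basis (Fin m) E (Fin m → E) := bEw0.reindex eιm
  have hbEw : ∀ j, bEw j = w j := by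
    intro j
    rw [Module.Basis.reindex_apply, Module.Basis.mk_apply]
    rfl
  have hwL : ∀ j, w j ∈ L := fun j => (b (eιm.symm j)).2
  have hLspanw : Submodule.span 𝒪 (Set.range w) = L := by
    rw [← hLspan0]
    congr 1
    exact (Set.range_comp w0 ⇑eιm.symm).trans (by rw [eιm.symm.surjective.range_eq, Set.image_univ])
  -- choose preimages `v j ∈ M'` of `w j`
  have hv' : ∀ j, ∃ x, x ∈ M' ∧ φ x = w j := by
    intro j
    obtain ⟨x, hx, hxw⟩ := hwL j
    exact ⟨x, hx, hxw⟩
  choose v hv1 hv2 using hv'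
  -- `v` is an `A`-basis of `M`
  let T : Matrix (Fin m) (Fin m) A := fun i j => bM.repr (v j) i
  have hρT : ∀ i j, ρ (T i j) = w j i := by
    intro i j
    have := congrFun (hv2 j) i
    exact this
  let Wm : Matrix (Fin m) (Fin m) E := fun i j => w j i
  have hdetW : IsUnit Wm.det := by
    have h1 := (Pi.basisFun E (Fin m)).isUnit_det bEw
    rw [Module.Basis.det_apply] at h1
    have h2 : (Pi.basisFun E (Fin m)).toMatrix bEw = Wm := by
      funext i j
      rw [Module.Basis.toMatrix_apply, Pi.basisFun_repr, hbEw]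
    rwa [h2] at h1
  have hdetT : IsUnit T.det := by
    have hres_eq : residue A T.det = residue A (algebraMap E A Wm.det) := by
      have h1 : (residue A).mapMatrix T
          = ((residue A).comp (algebraMap E A)).mapMatrix Wm := by
        ext i j
        show residue A (T i j) = residue A (algebraMap E A (Wm i j))
        have h2 : T i j - algebraMap E A (Wm i j) ∈ maximalIdeal A := by
          have := hρker (T i j)
          rwa [hρT i j] at this
        exact (Ideal.Quotient.mk_eq_mk_iff_sub_mem _ _).mpr h2
      have h3 := RingHom.map_det (residue A) T
      have h4 := RingHom.map_det ((residue A).comp (algebraMap E A)) Wm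
      rw [h3, h1, ← h4]
      rfl
    by_contra hTnu
    have hTmem : T.det ∈ maximalIdeal A := hTnu
    have hsub : T.det - algebraMap E A Wm.det ∈ maximalIdeal A :=
      (Ideal.Quotient.mk_eq_mk_iff_sub_mem _ _).mp hres_eq
    have hmem : algebraMap E A Wm.det ∈ maximalIdeal A := by
      have := sub_mem hTmem hsub
      simpa using this
    exact hmem (hdetW.map (algebraMap E A))
  let bv : Module.Basis (Fin m) A M := bM.map (Matrix.toLinearEquiv bM T hdetT)
  have hbv : ∀ j, bv j = v j := by
    intro j
    rw [Module.Basis.map_apply]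
    show Matrix.toLin bM bM T (bM j) = v j
    rw [Matrix.toLin_self]
    exact bM.sum_repr (v j)
  have hsumv : ∀ x : M, ∑ j, bv.repr x j • v j = x := by
    intro x
    have h1 := bv.sum_repr x
    simp only [hbv] at h1
    exact h1
  -- coefficients of elements of `M'` w.r.t. `bv` are "good"
  have hreprInt : ∀ z ∈ Submodule.span 𝒪 (Set.range w), ∀ j,
      ∃ o : 𝒪, bEw.repr z j = algebraMap 𝒪 E o := by
    intro z hz
    induction hz using Submodule.span_induction with
    | mem z hzmem =>
      obtain ⟨i, rfl⟩ := hzmem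
      intro j
      rw [← hbEw, bEw.repr_self]
      by_cases hij : i = j
      · subst hij; exact ⟨1, by simp⟩
      · exact ⟨0, by simp [Finsupp.single_apply, hij]⟩
    | zero => intro j; exact ⟨0, by simp⟩
    | add x y _ _ ihx ihy =>
      intro j
      obtain ⟨o1, h1⟩ := ihx j
      obtain ⟨o2, h2⟩ := ihy j
      exact ⟨o1 + o2, by rw [map_add, Finsupp.add_apply, h1, h2, map_add]⟩
    | smul o z _ ih =>
      intro j
      obtain ⟨o', h'⟩ := ih j
      refine ⟨o * o', ?_⟩
      rw [← algebraMap_smul E o z, map_smul, Finsupp.smul_apply, h', smul_eq_mul, ← map_mul]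
  have hφx : ∀ x : M, φ x = ∑ j, ρ (bv.repr x j) • w j := by
    intro x
    conv_lhs => rw [← hsumv x]
    rw [map_sum]
    refine Finset.sum_congr rfl fun j _ => ?_
    rw [hφsmulA, hv2]
  have hcoeffGood : ∀ x ∈ M', ∀ j, ∃ o : 𝒪, ρ (bv.repr x j) = algebraMap 𝒪 E o := by
    intro x hx j
    have hφL : φ x ∈ Submodule.span 𝒪 (Set.range w) := by
      rw [hLspanw]
      exact ⟨x, hx, rfl⟩
    obtain ⟨o, ho⟩ := hreprInt (φ x) hφL j
    refine ⟨o, ?_⟩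
    have h1 : bEw.repr (φ x) j = ρ (bv.repr x j) := by
      rw [hφx x]
      have h2 : (∑ i, ρ (bv.repr x i) • w i) = ∑ i, ρ (bv.repr x i) • bEw i := by
        simp only [hbEw]
      rw [h2]
      have h3 := bEw.repr_sum_self (fun i => ρ (bv.repr x i))
      exact congrFun h3 j
    rw [← h1, ho]
  -- generating sets
  obtain ⟨s, hs⟩ := hM'fg
  obtain ⟨t, ht⟩ := (Module.Finite.iff_fg (N := Subalgebra.toSubmodule A')).mp hA'fin
  let S : Set A := {a : A | ∃ g ∈ (↑s : Set M), ∃ j : Fin m, a = bv.repr g j}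
  have hSfin : S.Finite := by
    have hsub : S ⊆ (fun p : M × Fin m => (bv.repr p.1 p.2 : A))
        '' ((↑s : Set M) ×ˢ (Set.univ : Set (Fin m))) := by
      rintro a ⟨g, hg, j, rfl⟩
      exact ⟨(g, j), ⟨hg, Set.mem_univ _⟩, rfl⟩
    exact Set.Finite.subset ((s.finite_toSet.prod Set.finite_univ).image _) hsub
  have hsM' : (↑s : Set M) ⊆ (M' : Set M) := by
    rw [← hs]; exact Submodule.subset_span
  -- the algebra `A''`
  let A'' : Subalgebra 𝒪 A := Algebra.adjoin 𝒪 ((↑t : Set A) ∪ S)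
  have htA' : (↑t : Set A) ⊆ (A' : Set A) := by
    intro a ha
    have : a ∈ Submodule.span 𝒪 (↑t : Set A) := Submodule.subset_span ha
    rw [ht] at this
    exact this
  have hGenGood : ∀ a ∈ (↑t : Set A) ∪ S, ∃ o : 𝒪, a - algebraMap 𝒪 A o ∈ maximalIdeal A := by
    rintro a (ha | ha)
    · -- elements of `A'` are integral over `𝒪`
      haveI := hA'fin
      haveI : Algebra.IsIntegral 𝒪 A' := Algebra.IsIntegral.of_finite 𝒪 A'
      have h1 : IsIntegral 𝒪 (⟨a, htA' ha⟩ : A') := Algebra.IsIntegral.isIntegral _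
      have h2 : IsIntegral 𝒪 a := IsIntegral.map A'.val h1
      exact hIntGood a h2
    · obtain ⟨g, hg, j, rfl⟩ := ha
      obtain ⟨o, ho⟩ := hcoeffGood g (hsM' hg) j
      refine ⟨o, ?_⟩
      have h1 : algebraMap 𝒪 A o = algebraMap E A (ρ (bv.repr g j)) := by
        rw [ho, ← IsScalarTower.algebraMap_apply 𝒪 E A]
      rw [h1]
      exact hρker _
  have hA''good : ∀ a ∈ A'', ∃ o : 𝒪, a - algebraMap 𝒪 A o ∈ maximalIdeal A := by
    have hB : ∀ a ∈ A'', a ∈ ({a : A | ∃ o : 𝒪, a - algebraMap 𝒪 A o ∈ maximalIdeal A}) := by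
      intro a ha
      have hle : A'' ≤
          { carrier := {a : A | ∃ o : 𝒪, a - algebraMap 𝒪 A o ∈ maximalIdeal A}
            mul_mem' := by
              rintro a b ⟨o1, h1⟩ ⟨o2, h2⟩
              refine ⟨o1 * o2, ?_⟩
              have heq : a * b - algebraMap 𝒪 A (o1 * o2)
                  = a * (b - algebraMap 𝒪 A o2) + (a - algebraMap 𝒪 A o1) * algebraMap 𝒪 A o2 := by
                rw [map_mul]; ring
              rw [heq]
              exact add_mem (Ideal.mul_mem_left _ _ h2) (Ideal.mul_mem_right _ _ h1)
            add_mem' := by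
              rintro a b ⟨o1, h1⟩ ⟨o2, h2⟩
              refine ⟨o1 + o2, ?_⟩
              have heq : a + b - algebraMap 𝒪 A (o1 + o2)
                  = (a - algebraMap 𝒪 A o1) + (b - algebraMap 𝒪 A o2) := by
                rw [map_add]; ring
              rw [heq]
              exact add_mem h1 h2
            algebraMap_mem' := fun o => ⟨o, by simp⟩ } := Algebra.adjoin_le hGenGood
      exact hle ha
    exact hB
  have hA''int : ∀ a ∈ A'', IsIntegral 𝒪 a := fun a ha => hGoodInt a (hA''good a ha)
  have hA'le : A' ≤ A'' := by
    intro a ha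
    have h1 : a ∈ Submodule.span 𝒪 (↑t : Set A) := by rw [ht]; exact ha
    have h2 : Submodule.span 𝒪 (↑t : Set A) ≤ Subalgebra.toSubmodule A'' := by
      refine Submodule.span_le.mpr ?_
      intro x hx
      exact Algebra.subset_adjoin (Or.inl hx)
    exact h2 h1
  have hA''fin : Module.Finite 𝒪 A'' := by
    refine (Module.Finite.iff_fg (N := Subalgebra.toSubmodule A'')).mpr ?_
    exact fg_adjoin_of_finite (Set.Finite.union t.finite_toSet hSfin)
      (fun a ha => hGoodInt a (hGenGood a ha))
  -- coefficients of `M'` lie in `A''`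
  have hM'coeff : ∀ x ∈ M', ∀ j, bv.repr x j ∈ A'' := by
    intro x hx
    rw [← hs] at hx
    induction hx using Submodule.span_induction with
    | mem g hg => intro j; exact Algebra.subset_adjoin (Or.inr ⟨g, hg, j, rfl⟩)
    | zero =>
      intro j
      simp only [map_zero, Finsupp.coe_zero, Pi.zero_apply]
      exact zero_mem _
    | add x y _ _ ihx ihy =>
      intro j
      rw [map_add, Finsupp.add_apply]
      exact add_mem (ihx j) (ihy j)
    | smul o x _ ih =>
      intro j
      rw [← algebraMap_smul A o x, map_smul, Finsupp.smul_apply, smul_eq_mul]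
      exact A''.mul_mem (A''.algebraMap_mem o) (ih j)
  have hNgen : ∀ x ∈ M', x ∈ Submodule.span 𝒪 {y : M | ∃ a ∈ A'', ∃ x ∈ M', y = a • x} :=
    fun x hx => Submodule.subset_span ⟨1, A''.one_mem, x, hx, (one_smul A x).symm⟩
  have hvN : ∀ i, v i ∈ Submodule.span 𝒪 {y : M | ∃ a ∈ A'', ∃ x ∈ M', y = a • x} :=
    fun i => hNgen (v i) (hv1 i)
  -- characterization of `N = A''·M'`
  have hNchar1 : ∀ y ∈ Submodule.span 𝒪 {y : M | ∃ a ∈ A'', ∃ x ∈ M', y = a • x},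
      ∃ c : Fin m → A, (∀ j, c j ∈ A'') ∧ y = ∑ j, c j • v j := by
    intro y hy
    induction hy using Submodule.span_induction with
    | mem y hymem =>
      obtain ⟨a, haA, x, hxM, rfl⟩ := hymem
      refine ⟨fun j => a * bv.repr x j, fun j => A''.mul_mem haA (hM'coeff x hxM j), ?_⟩
      conv_lhs => rw [← hsumv x]
      rw [Finset.smul_sum]
      refine Finset.sum_congr rfl fun j _ => ?_
      rw [smul_smul]
    | zero => exact ⟨0, fun j => zero_mem _, by simp⟩
    | add y z _ _ ihy ihz =>
      obtain ⟨c1, h1, rfl⟩ := ihy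
      obtain ⟨c2, h2, rfl⟩ := ihz
      refine ⟨c1 + c2, fun j => add_mem (h1 j) (h2 j), ?_⟩
      rw [← Finset.sum_add_distrib]
      exact Finset.sum_congr rfl fun j _ => (add_smul _ _ _).symm
    | smul o y _ ih =>
      obtain ⟨c, hc, rfl⟩ := ih
      refine ⟨fun j => algebraMap 𝒪 A o * c j,
        fun j => A''.mul_mem (A''.algebraMap_mem o) (hc j), ?_⟩
      rw [Finset.smul_sum]
      refine Finset.sum_congr rfl fun j _ => ?_
      rw [← algebraMap_smul A o (c j • v j), smul_smul]
  have hreprv : ∀ c : Fin m → A, ∀ j, bv.repr (∑ i, c i • v i) j = c j := by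
    intro c j
    have h1 : (∑ i, c i • v i) = ∑ i, c i • bv i := by simp only [hbv]
    rw [h1]
    exact congrFun (bv.repr_sum_self c) j
  refine ⟨A'', hA'le, hA''fin, ⟨v, hvN, ?_⟩, ?_, ?_⟩
  · -- freeness
    intro y hy
    obtain ⟨c, hc, hyc⟩ := hNchar1 y hy
    refine ⟨fun j => ⟨c j, hc j⟩, hyc, ?_⟩
    intro c' hc'
    funext j
    apply Subtype.ext
    show (c' j : A) = c j
    have h1 : (c' j : A) = bv.repr y j := by
      rw [hc']; exact (hreprv (fun i => (c' i : A)) j).symm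
    have h2 : c j = bv.repr y j := by
      rw [hyc]; exact (hreprv c j).symm
    rw [h1, ← h2]
  · -- same image in `M/nM`
    intro x
    constructor
    · rintro ⟨y, hyN, hxy⟩
      obtain ⟨c, hc, rfl⟩ := hNchar1 y hyN
      choose o ho using fun j => hA''good (c j) (hc j)
      refine ⟨∑ j, o j • v j, ?_, ?_⟩
      · exact Submodule.sum_mem _ fun j _ => Submodule.smul_mem _ _ (hv1 j)
      · have hdiff : (∑ j, c j • v j) - (∑ j, o j • v j)
            = ∑ j, (c j - algebraMap 𝒪 A (o j)) • v j := by
          rw [← Finset.sum_sub_distrib]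
          refine Finset.sum_congr rfl fun j _ => ?_
          rw [sub_smul, algebraMap_smul]
        have hmem : (∑ j, c j • v j) - (∑ j, o j • v j)
            ∈ (maximalIdeal A • ⊤ : Submodule A M) := by
          rw [hdiff]
          exact Submodule.sum_mem _
            (fun j _ => Submodule.smul_mem_smul (ho j) Submodule.mem_top)
        have heq : x - ∑ j, o j • v j
            = (x - ∑ j, c j • v j) + ((∑ j, c j • v j) - ∑ j, o j • v j) :=
          (sub_add_sub_cancel _ _ _).symm
        rw [heq]
        exact Submodule.add_mem _ hxy hmem
    · rintro ⟨y, hyM, hxy⟩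
      exact ⟨y, hNgen y hyM, hxy⟩
  · -- kernel of `N → M/nM`
    intro y hyN
    constructor
    · intro hymem
      obtain ⟨c, hc, rfl⟩ := hNchar1 y hyN
      have hcn : ∀ j, c j ∈ maximalIdeal A := by
        intro j
        have h1 : bv.repr (∑ i, c i • v i) j ∈ maximalIdeal A := by
          refine Submodule.smul_induction_on hymem ?_ ?_
          · intro r hr z _
            rw [map_smul, Finsupp.smul_apply, smul_eq_mul]
            exact Ideal.mul_mem_right _ _ hr
          · intro y1 y2 hy1 hy2
            rw [map_add, Finsupp.add_apply]
            exact add_mem hy1 hy2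
        rwa [hreprv c j] at h1
      refine Submodule.sum_mem _ fun j _ => ?_
      exact Submodule.subset_span ⟨c j, hc j, hcn j, v j, hvN j, rfl⟩
    · intro hymem
      have hle : Submodule.span 𝒪 {z : M | ∃ a ∈ A'', a ∈ maximalIdeal A ∧
          ∃ x ∈ Submodule.span 𝒪 {y : M | ∃ a ∈ A'', ∃ x ∈ M', y = a • x}, z = a • x}
          ≤ Submodule.restrictScalars 𝒪 (maximalIdeal A • ⊤ : Submodule A M) := by
        refine Submodule.span_le.mpr ?_
        rintro z ⟨a, _, han, x, _, rfl⟩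
        have h : a • x ∈ (maximalIdeal A • ⊤ : Submodule A M) :=
          Submodule.smul_mem_smul han Submodule.mem_top
        exact h
      exact hle hymem
end

section
/- Let A be a finite-dimensional local algebra over a field E with residue field E and maximal ideal n. Then any 𝒪-submodule n' of n of finite type over a complete DVR 𝒪 ⊆ E with n' ⊗_𝒪 E = n generates an 𝒪-subalgebra A' = 𝒪 ⊕ (ideal generated by n') ⊆ A that is a finite 𝒪-module with A' ⊗_𝒪 E ≅ A; conversely any 𝒪-subalgebra A' ⊆ A finite over 𝒪 with A' ⊗_𝒪 E ≅ A has the form 𝒪 ⊕ n' with n' = A' ∩ n an 𝒪-lattice in n. -/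
/-!
STATEMENT 14: Let `𝒪` be a complete DVR with fraction field `E`, and `A` a local
Artin `E`-algebra with residue field `E` and maximal ideal `n`.
(→) Any finitely generated `𝒪`-submodule `n' ⊆ n` which is an `𝒪`-lattice in `n`
(i.e. spans `n` over `E`) generates an `𝒪`-subalgebra `A' = 𝒪[n'] ⊆ A` which is a
finite `𝒪`-module with `A' ⊗_𝒪 E ≅ A` (i.e. spanning `A` over `E`).
(←) Conversely, any `𝒪`-subalgebra `A' ⊆ A`, finite over `𝒪` and spanning `A`
over `E`, has the form `𝒪 ⊕ n'` with `n' = A' ∩ n` an `𝒪`-lattice in `n`.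
-/

open IsLocalRing

theorem stmt_14 (𝒪 E A : Type) [CommRing 𝒪] [IsDomain 𝒪] [IsDiscreteValuationRing 𝒪]
    [IsAdicComplete (maximalIdeal 𝒪) 𝒪]
    [Field E] [Algebra 𝒪 E] [IsFractionRing 𝒪 E]
    [CommRing A] [IsLocalRing A] [IsArtinianRing A]
    [Algebra E A] [Algebra 𝒪 A] [IsScalarTower 𝒪 E A]
    (hres : Function.Bijective ((residue A).comp (algebraMap E A))) :
    -- forward direction
    (∀ n' : Submodule 𝒪 A, (n' : Set A) ⊆ (maximalIdeal A : Set A) → n'.FG →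
      Submodule.span E (n' : Set A) = Submodule.restrictScalars E (maximalIdeal A) →
      (Module.Finite 𝒪 (Algebra.adjoin 𝒪 (n' : Set A)) ∧
        Submodule.span E ((Algebra.adjoin 𝒪 (n' : Set A) : Subalgebra 𝒪 A) : Set A) = ⊤)) ∧
    -- converse direction
    (∀ A' : Subalgebra 𝒪 A, Module.Finite 𝒪 A' →
      Submodule.span E (A' : Set A) = ⊤ →
      ((A'.toSubmodule ⊓ Submodule.restrictScalars 𝒪 (maximalIdeal A)).FG ∧
       Submodule.span E
         ((A'.toSubmodule ⊓ Submodule.restrictScalars 𝒪 (maximalIdeal A) : Submodule 𝒪 A) : Set A)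
         = Submodule.restrictScalars E (maximalIdeal A) ∧
       (∀ x ∈ A', ∃ c : 𝒪,
          x - algebraMap 𝒪 A c ∈ A'.toSubmodule ⊓ Submodule.restrictScalars 𝒪 (maximalIdeal A)) ∧
       (∀ c : 𝒪, algebraMap 𝒪 A c ∈
          A'.toSubmodule ⊓ Submodule.restrictScalars 𝒪 (maximalIdeal A) → c = 0))) := by
  -- the residue ring equivalence E ≃ A/n
  let φ : E ≃+* ResidueField A := RingEquiv.ofBijective _ hres
  have hφ : ∀ e : E, φ e = residue A (algebraMap E A e) := fun _ => rfl
  -- the maximal ideal is nilpotent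
  obtain ⟨k, hk⟩ : IsNilpotent (maximalIdeal A) := by
    rw [← IsLocalRing.jacobson_eq_maximalIdeal (⊥ : Ideal A) bot_ne_top]
    exact IsArtinianRing.isNilpotent_jacobson_bot
  -- every element of the maximal ideal is nilpotent
  have hnilp : ∀ x ∈ maximalIdeal A, IsNilpotent x := by
    intro x hx
    exact ⟨k, by simpa [hk] using (Ideal.pow_mem_pow hx k : x ^ k ∈ (maximalIdeal A) ^ k)⟩
  -- elements of E map to the maximal ideal only when zero
  have hE0 : ∀ e : E, algebraMap E A e ∈ maximalIdeal A → e = 0 := by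
    intro e he
    have : ((residue A).comp (algebraMap E A)) e = ((residue A).comp (algebraMap E A)) 0 := by
      simpa [Ideal.Quotient.eq_zero_iff_mem] using he
    exact hres.injective this
  -- identity relating φ and the algebra maps
  have hφalg : ∀ c : 𝒪, residue A (algebraMap 𝒪 A c) = φ (algebraMap 𝒪 E c) := by
    intro c
    rw [hφ, ← IsScalarTower.algebraMap_apply]
  -- decomposition A = E·1 ⊕ n
  have hdec : ∀ a : A, ∃ e : E, a - algebraMap E A e ∈ maximalIdeal A := by
    intro a
    refine ⟨φ.symm (residue A a), ?_⟩
    have h1 : residue A (algebraMap E A (φ.symm (residue A a))) = residue A a := by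
      rw [← hφ, φ.apply_symm_apply]
    rw [← Ideal.Quotient.eq_zero_iff_mem]
    have h2 : residue A (a - algebraMap E A (φ.symm (residue A a))) = 0 := by
      rw [map_sub, h1, sub_self]
    exact h2
  constructor
  · -- forward direction
    intro n' hsub hfg hspan
    obtain ⟨s, hs⟩ := hfg
    have hadj : Algebra.adjoin 𝒪 (n' : Set A) = Algebra.adjoin 𝒪 (s : Set A) := by
      rw [← hs, Algebra.adjoin_span]
    have hint : ∀ x ∈ (s : Set A), IsIntegral 𝒪 x := by
      intro x hx
      have hxn : x ∈ maximalIdeal A := hsub (by rw [← hs]; exact Submodule.subset_span hx)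
      obtain ⟨m, hm⟩ := hnilp x hxn
      rcases Nat.eq_zero_or_pos m with h0 | hpos
      · exact absurd hm (by simp [h0])
      · exact ⟨Polynomial.X ^ m, Polynomial.monic_X_pow m, by simpa using hm⟩
    have hfin : (Subalgebra.toSubmodule (Algebra.adjoin 𝒪 (s : Set A))).FG :=
      fg_adjoin_of_finite s.finite_toSet hint
    constructor
    · rw [hadj]
      exact Module.Finite.iff_fg.mpr hfin
    · -- spanning
      rw [eq_top_iff]
      rintro a -
      obtain ⟨e, he⟩ := hdec a
      have h1 : algebraMap E A e ∈ Submodule.span E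
          ((Algebra.adjoin 𝒪 (n' : Set A) : Subalgebra 𝒪 A) : Set A) := by
        have h1' := Submodule.smul_mem (Submodule.span E
          ((Algebra.adjoin 𝒪 (n' : Set A) : Subalgebra 𝒪 A) : Set A)) e
          (Submodule.subset_span (one_mem (Algebra.adjoin 𝒪 (n' : Set A))))
        simpa [Algebra.smul_def] using h1'
      have h2 : a - algebraMap E A e ∈ Submodule.span E
          ((Algebra.adjoin 𝒪 (n' : Set A) : Subalgebra 𝒪 A) : Set A) := by
        have hmem : a - algebraMap E A e ∈ Submodule.span E (n' : Set A) := by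
          rw [hspan]; exact he
        exact Submodule.span_mono Algebra.subset_adjoin hmem
      simpa using add_mem h1 h2
  · -- converse direction
    intro A' hfinA' hspanA'
    haveI := hfinA'
    haveI : Algebra.IsIntegral 𝒪 A' := Algebra.IsIntegral.of_finite 𝒪 A'
    set N : Submodule 𝒪 A := A'.toSubmodule ⊓ Submodule.restrictScalars 𝒪 (maximalIdeal A) with hN
    -- claim 3: every x ∈ A' decomposes as c + m
    have key : ∀ x ∈ A', ∃ c : 𝒪, x - algebraMap 𝒪 A c ∈ N := by
      intro x hx
      have hxint : IsIntegral 𝒪 x := by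
        have h := Algebra.IsIntegral.isIntegral (R := 𝒪) (⟨x, hx⟩ : A')
        exact h.map A'.val
      -- the E-component map as an 𝒪-algebra hom
      let ψ : A →ₐ[𝒪] E := AlgHom.mk' (φ.symm.toRingHom.comp (residue A)) (by
        intro c a
        show φ.symm (residue A (c • a)) = c • φ.symm (residue A a)
        rw [Algebra.smul_def, map_mul, map_mul, hφalg c, φ.symm_apply_apply,
          Algebra.smul_def])
      have heint : IsIntegral 𝒪 (ψ x) := hxint.map ψ
      obtain ⟨c, hc⟩ := IsIntegrallyClosed.isIntegral_iff.mp heint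
      refine ⟨c, sub_mem hx (A'.algebraMap_mem c), ?_⟩
      show x - algebraMap 𝒪 A c ∈ maximalIdeal A
      rw [← Ideal.Quotient.eq_zero_iff_mem]
      have h2 : residue A (x - algebraMap 𝒪 A c) = 0 := by
        rw [map_sub, hφalg c, hc]
        show residue A x - φ (φ.symm (residue A x)) = 0
        rw [φ.apply_symm_apply, sub_self]
      exact h2
    -- span E N ≤ n
    have hNle : Submodule.span E (N : Set A) ≤ Submodule.restrictScalars E (maximalIdeal A) := by
      rw [Submodule.span_le]
      intro x hx
      exact hx.2
    refine ⟨?_, ?_, key, ?_⟩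
    · -- FG
      haveI : IsNoetherian 𝒪 A'.toSubmodule :=
        isNoetherian_of_fg_of_noetherian _ (Module.Finite.iff_fg.mp hfinA')
      have hmap : N = Submodule.map A'.toSubmodule.subtype
          (N.comap A'.toSubmodule.subtype) := by
        rw [Submodule.map_comap_eq, Submodule.range_subtype]
        exact (inf_of_le_right (inf_le_left : N ≤ A'.toSubmodule)).symm
      rw [hmap]
      exact (IsNoetherian.noetherian _).map _
    · -- span E (A' ∩ n) = n
      apply le_antisymm hNle
      -- A' ⊆ span E N ⊔ E·1
      have hsup : Submodule.span E (A' : Set A) ≤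
          Submodule.span E (N : Set A) ⊔ LinearMap.range (Algebra.linearMap E A) := by
        rw [Submodule.span_le]
        intro a ha
        obtain ⟨c, hc⟩ := key a ha
        have h1 : a - algebraMap 𝒪 A c ∈
            Submodule.span E (N : Set A) ⊔ LinearMap.range (Algebra.linearMap E A) :=
          le_sup_left (α := Submodule E A) (Submodule.subset_span hc)
        have h2 : algebraMap 𝒪 A c ∈
            Submodule.span E (N : Set A) ⊔ LinearMap.range (Algebra.linearMap E A) := by
          apply le_sup_right (α := Submodule E A)
          exact ⟨algebraMap 𝒪 E c, by simp [Algebra.linearMap_apply,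
            ← IsScalarTower.algebraMap_apply]⟩
        simpa using add_mem h1 h2
      intro x hx
      have hx' : (x : A) ∈ Submodule.span E (N : Set A) ⊔
          LinearMap.range (Algebra.linearMap E A) := by
        apply hsup
        rw [hspanA']
        trivial
      obtain ⟨y, hy, z, hz, hyz⟩ := Submodule.mem_sup.mp hx'
      obtain ⟨e, he⟩ := hz
      have hyn : y ∈ maximalIdeal A := hNle hy
      have hzn : z ∈ maximalIdeal A := by
        have : z = x - y := by rw [← hyz]; ring
        rw [this]
        exact sub_mem hx hyn
      have he0 : e = 0 := hE0 e (by rwa [show algebraMap E A e = z from he])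
      have : z = 0 := by rw [← he, he0, map_zero]
      rw [← hyz, this, add_zero]
      exact hy
    · -- c maps into n only when 0
      intro c hc
      have hc' : algebraMap E A (algebraMap 𝒪 E c) ∈ maximalIdeal A := by
        rw [← IsScalarTower.algebraMap_apply]; exact hc.2
      have h0 := hE0 _ hc'
      exact IsFractionRing.injective 𝒪 E (by simpa using h0)
end
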